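/- arXiv:math/9905194 — 2 statements merged into one kernel-verified Lean document; each statement's English description precedes it below -/
import Mathlib

section
/- If S ⊆ ℤ² satisfies N_S(x) ≤ 3 for every x ∈ S, then N_S(y) ≤ 6 for every y ∉ S, and consequently the upper density of S is at most 6/11. -/
open Filter

/-- `y` is a neighbor of `x` in the 8-point (Moore) neighborhood of `ℤ²`. -/
def IsNbr (x y : ℤ × ℤ) : Prop :=
  y ≠ x ∧ |y.1 - x.1| ≤ 1 ∧ |y.2 - x.2| ≤ 1

/-- `N_S(x)`: the number of neighbors of `x` lying in `S`. -/
noncomputable def nbrCount (S : Set (ℤ × ℤ)) (x : ℤ × ℤ) : ℕ :=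
  Set.ncard {y ∈ S | IsNbr x y}

/-- The box `B_r = {x : |x₁| < r, |x₂| < r}`. -/
def box (r : ℕ) : Set (ℤ × ℤ) :=
  {x | |x.1| < (r : ℤ) ∧ |x.2| < (r : ℤ)}

/-- The upper density of `S ⊆ ℤ²`: `limsup_{r → ∞} |S ∩ B_r| / (2r-1)²`. -/
noncomputable def upperDensity (S : Set (ℤ × ℤ)) : ℝ :=
  limsup (fun r : ℕ => (Set.ncard (S ∩ box r) : ℝ) / (2 * (r : ℝ) - 1) ^ 2) atTop

open Finset in
lemma isNbr_comm {x y : ℤ × ℤ} : IsNbr x y ↔ IsNbr y x := by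
  unfold IsNbr
  rw [abs_sub_comm, abs_sub_comm y.2, ne_comm]

open Finset in
noncomputable def ringF (x : ℤ × ℤ) : Finset (ℤ × ℤ) :=
  ((Finset.Icc (x.1-1) (x.1+1)) ×ˢ (Finset.Icc (x.2-1) (x.2+1))).erase x

lemma mem_ringF {x z : ℤ × ℤ} : z ∈ ringF x ↔ IsNbr x z := by
  simp only [ringF, IsNbr, Finset.mem_erase, Finset.mem_product, Finset.mem_Icc, abs_le,
    ne_eq]
  constructor
  · rintro ⟨h1, ⟨a, b⟩, c, d⟩; exact ⟨h1, ⟨by omega, by omega⟩, by omega, by omega⟩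
  · rintro ⟨h1, ⟨a, b⟩, c, d⟩; exact ⟨h1, ⟨by omega, by omega⟩, by omega, by omega⟩

lemma card_ringF (x : ℤ × ℤ) : (ringF x).card = 8 := by
  rw [ringF, Finset.card_erase_of_mem (by simp), Finset.card_product]
  simp only [Int.card_Icc]
  have h1 : x.1 + 1 + 1 - (x.1 - 1) = 3 := by ring
  have h2 : x.2 + 1 + 1 - (x.2 - 1) = 3 := by ring
  rw [h1, h2]
  rfl

open scoped Classical in
lemma nbrCount_eq (S : Set (ℤ × ℤ)) (x : ℤ × ℤ) :
    nbrCount S x = ((ringF x).filter (· ∈ S)).card := by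
  rw [nbrCount, ← Set.ncard_coe_finset]
  congr 1
  ext z
  simp only [Set.mem_setOf_eq, Finset.coe_filter, mem_ringF]
  tauto

open scoped Classical in
lemma four_le (S : Set (ℤ × ℤ)) (e z1 z2 z3 z4 : ℤ × ℤ)
    (h1 : z1 ∈ S) (h2 : z2 ∈ S) (h3 : z3 ∈ S) (h4 : z4 ∈ S)
    (n1 : IsNbr e z1) (n2 : IsNbr e z2) (n3 : IsNbr e z3) (n4 : IsNbr e z4)
    (d12 : z1 ≠ z2) (d13 : z1 ≠ z3) (d14 : z1 ≠ z4)
    (d23 : z2 ≠ z3) (d24 : z2 ≠ z4) (d34 : z3 ≠ z4) :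
    4 ≤ nbrCount S e := by
  rw [nbrCount_eq]
  have hsub : ({z1, z2, z3, z4} : Finset (ℤ × ℤ)) ⊆ (ringF e).filter (· ∈ S) := by
    intro z hz
    simp only [Finset.mem_insert, Finset.mem_singleton] at hz
    rcases hz with rfl | rfl | rfl | rfl <;>
      exact Finset.mem_filter.mpr ⟨mem_ringF.mpr (by assumption), by assumption⟩
  have hcard : ({z1, z2, z3, z4} : Finset (ℤ × ℤ)).card = 4 := by
    rw [Finset.card_insert_of_notMem (by simp [d12, d13, d14]),
      Finset.card_insert_of_notMem (by simp [d23, d24]),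
      Finset.card_insert_of_notMem (by simp [d34]), Finset.card_singleton]
  calc 4 = ({z1, z2, z3, z4} : Finset (ℤ × ℤ)).card := hcard.symm
    _ ≤ _ := Finset.card_le_card hsub

lemma part1 (S : Set (ℤ × ℤ)) (h : ∀ x ∈ S, nbrCount S x ≤ 3) :
    ∀ y ∉ S, nbrCount S y ≤ 6 := by
  classical
  intro y hy
  by_contra hc
  push_neg at hc
  have h7 : 7 ≤ ((ringF y).filter (· ∈ S)).card := by
    rw [← nbrCount_eq]; omega
  -- there is at most one ring point missing from S
  obtain ⟨m, hm⟩ : ∃ m : ℤ × ℤ, ∀ z, IsNbr y z → z ≠ m → z ∈ S := by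
    set Nf := (ringF y).filter (· ∈ S) with hNf
    set M := ringF y \ Nf with hM
    have hsub : Nf ⊆ ringF y := Finset.filter_subset _ _
    have hMcard : M.card ≤ 1 := by
      have h' := Finset.card_sdiff_add_card_eq_card hsub
      rw [← hM] at h'
      have h8 := card_ringF y
      omega
    rcases M.eq_empty_or_nonempty with hMe | ⟨m, hmM⟩
    · refine ⟨y, fun z hz _ => ?_⟩
      have hzr : z ∈ ringF y := mem_ringF.mpr hz
      have : z ∈ Nf := by
        by_contra hzn
        have : z ∈ M := Finset.mem_sdiff.mpr ⟨hzr, hzn⟩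
        simp [hMe] at this
      exact (Finset.mem_filter.mp this).2
    · refine ⟨m, fun z hz hzm => ?_⟩
      have hzr : z ∈ ringF y := mem_ringF.mpr hz
      by_contra hzS
      have hzM : z ∈ M := Finset.mem_sdiff.mpr ⟨hzr, by simp [hNf, hzr, hzS]⟩
      exact hzm (Finset.card_le_one.mp hMcard z hzM m hmM)
  -- main helper: a point e of S with 4 neighbors in S contradicts h
  have main : ∀ e z1 z2 z3 z4 : ℤ × ℤ, IsNbr y e → e ≠ m →
      IsNbr y z1 → IsNbr y z2 → IsNbr y z3 → IsNbr y z4 →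
      z1 ≠ m → z2 ≠ m → z3 ≠ m → z4 ≠ m →
      IsNbr e z1 → IsNbr e z2 → IsNbr e z3 → IsNbr e z4 →
      z1 ≠ z2 → z1 ≠ z3 → z1 ≠ z4 → z2 ≠ z3 → z2 ≠ z4 → z3 ≠ z4 → False := by
    intro e z1 z2 z3 z4 he hem hz1 hz2 hz3 hz4 hm1 hm2 hm3 hm4 n1 n2 n3 n4 d12 d13 d14 d23 d24 d34
    have heS : e ∈ S := hm e he hem
    have h4 := four_le S e z1 z2 z3 z4 (hm _ hz1 hm1) (hm _ hz2 hm2) (hm _ hz3 hm3) (hm _ hz4 hm4)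
      n1 n2 n3 n4 d12 d13 d14 d23 d24 d34
    have := h e heS
    omega
  obtain ⟨y1, y2⟩ := y
  by_cases H1 : m = (y1+1, y2) ∨ m = (y1+1, y2+1) ∨ m = (y1+1, y2-1) ∨ m = (y1, y2+1) ∨ m = (y1, y2-1)
  case neg =>
    push_neg at H1
    obtain ⟨a1, a2, a3, a4, a5⟩ := H1
    exact main (y1+1, y2) (y1+1, y2+1) (y1+1, y2-1) (y1, y2+1) (y1, y2-1)
      (by simp [IsNbr, Prod.ext_iff] <;> omega) (Ne.symm a1)
      (by simp [IsNbr, Prod.ext_iff] <;> omega) (by simp [IsNbr, Prod.ext_iff] <;> omega)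
      (by simp [IsNbr, Prod.ext_iff] <;> omega) (by simp [IsNbr, Prod.ext_iff] <;> omega)
      (Ne.symm a2) (Ne.symm a3) (Ne.symm a4) (Ne.symm a5)
      (by simp [IsNbr, Prod.ext_iff] <;> omega) (by simp [IsNbr, Prod.ext_iff] <;> omega)
      (by simp [IsNbr, Prod.ext_iff] <;> omega) (by simp [IsNbr, Prod.ext_iff] <;> omega)
      (by simp [Prod.ext_iff] <;> omega) (by simp [Prod.ext_iff] <;> omega)
      (by simp [Prod.ext_iff] <;> omega) (by simp [Prod.ext_iff] <;> omega)
      (by simp [Prod.ext_iff] <;> omega) (by simp [Prod.ext_iff] <;> omega)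
  case pos =>
  by_cases H2 : m = (y1-1, y2) ∨ m = (y1-1, y2+1) ∨ m = (y1-1, y2-1) ∨ m = (y1, y2+1) ∨ m = (y1, y2-1)
  case neg =>
    push_neg at H2
    obtain ⟨a1, a2, a3, a4, a5⟩ := H2
    exact main (y1-1, y2) (y1-1, y2+1) (y1-1, y2-1) (y1, y2+1) (y1, y2-1)
      (by simp [IsNbr, Prod.ext_iff] <;> omega) (Ne.symm a1)
      (by simp [IsNbr, Prod.ext_iff] <;> omega) (by simp [IsNbr, Prod.ext_iff] <;> omega)
      (by simp [IsNbr, Prod.ext_iff] <;> omega) (by simp [IsNbr, Prod.ext_iff] <;> omega)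
      (Ne.symm a2) (Ne.symm a3) (Ne.symm a4) (Ne.symm a5)
      (by simp [IsNbr, Prod.ext_iff] <;> omega) (by simp [IsNbr, Prod.ext_iff] <;> omega)
      (by simp [IsNbr, Prod.ext_iff] <;> omega) (by simp [IsNbr, Prod.ext_iff] <;> omega)
      (by simp [Prod.ext_iff] <;> omega) (by simp [Prod.ext_iff] <;> omega)
      (by simp [Prod.ext_iff] <;> omega) (by simp [Prod.ext_iff] <;> omega)
      (by simp [Prod.ext_iff] <;> omega) (by simp [Prod.ext_iff] <;> omega)
  case pos =>
  have H34 : m = ((y1 : ℤ), y2+1) ∨ m = ((y1 : ℤ), y2-1) := by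
    obtain ⟨m1, m2⟩ := m
    rcases H1 with h' | h' | h' | h' | h' <;> rcases H2 with h'' | h'' | h'' | h'' | h'' <;>
      simp only [Prod.mk.injEq] at h' h'' ⊢ <;> omega
  rcases H34 with rfl | rfl
  · -- missing point is (y1, y2+1); use e = (y1, y2-1)
    exact main (y1, y2-1) (y1+1, y2-1) (y1-1, y2-1) (y1+1, y2) (y1-1, y2)
      (by simp [IsNbr, Prod.ext_iff] <;> omega) (by simp [Prod.ext_iff] <;> omega)
      (by simp [IsNbr, Prod.ext_iff] <;> omega) (by simp [IsNbr, Prod.ext_iff] <;> omega)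
      (by simp [IsNbr, Prod.ext_iff] <;> omega) (by simp [IsNbr, Prod.ext_iff] <;> omega)
      (by simp [Prod.ext_iff] <;> omega) (by simp [Prod.ext_iff] <;> omega)
      (by simp [Prod.ext_iff] <;> omega) (by simp [Prod.ext_iff] <;> omega)
      (by simp [IsNbr, Prod.ext_iff] <;> omega) (by simp [IsNbr, Prod.ext_iff] <;> omega)
      (by simp [IsNbr, Prod.ext_iff] <;> omega) (by simp [IsNbr, Prod.ext_iff] <;> omega)
      (by simp [Prod.ext_iff] <;> omega) (by simp [Prod.ext_iff] <;> omega)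
      (by simp [Prod.ext_iff] <;> omega) (by simp [Prod.ext_iff] <;> omega)
      (by simp [Prod.ext_iff] <;> omega) (by simp [Prod.ext_iff] <;> omega)
  · -- missing point is (y1, y2-1); use e = (y1, y2+1)
    exact main (y1, y2+1) (y1+1, y2+1) (y1-1, y2+1) (y1+1, y2) (y1-1, y2)
      (by simp [IsNbr, Prod.ext_iff] <;> omega) (by simp [Prod.ext_iff] <;> omega)
      (by simp [IsNbr, Prod.ext_iff] <;> omega) (by simp [IsNbr, Prod.ext_iff] <;> omega)
      (by simp [IsNbr, Prod.ext_iff] <;> omega) (by simp [IsNbr, Prod.ext_iff] <;> omega)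
      (by simp [Prod.ext_iff] <;> omega) (by simp [Prod.ext_iff] <;> omega)
      (by simp [Prod.ext_iff] <;> omega) (by simp [Prod.ext_iff] <;> omega)
      (by simp [IsNbr, Prod.ext_iff] <;> omega) (by simp [IsNbr, Prod.ext_iff] <;> omega)
      (by simp [IsNbr, Prod.ext_iff] <;> omega) (by simp [IsNbr, Prod.ext_iff] <;> omega)
      (by simp [Prod.ext_iff] <;> omega) (by simp [Prod.ext_iff] <;> omega)
      (by simp [Prod.ext_iff] <;> omega) (by simp [Prod.ext_iff] <;> omega)
      (by simp [Prod.ext_iff] <;> omega) (by simp [Prod.ext_iff] <;> omega)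

noncomputable def Bf (n : ℕ) : Finset (ℤ × ℤ) :=
  (Finset.Ioo (-(n:ℤ)) n) ×ˢ (Finset.Ioo (-(n:ℤ)) n)

lemma mem_Bf {n : ℕ} {z : ℤ × ℤ} :
    z ∈ Bf n ↔ (-(n:ℤ) < z.1 ∧ z.1 < n) ∧ (-(n:ℤ) < z.2 ∧ z.2 < n) := by
  simp [Bf, Finset.mem_product]

lemma card_Bf (r : ℕ) : (Bf (r+1)).card = (2*r+1)^2 := by
  rw [Bf, Finset.card_product, Int.card_Ioo]
  have h : ((r+1:ℕ):ℤ) - -((r+1:ℕ):ℤ) - 1 = ((2*r+1 : ℕ) : ℤ) := by push_cast; ring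
  rw [h, Int.toNat_natCast]
  ring

open scoped Classical in
lemma count_le (S : Set (ℤ × ℤ)) (h3 : ∀ x ∈ S, nbrCount S x ≤ 3)
    (h6 : ∀ y ∉ S, nbrCount S y ≤ 6) (r : ℕ) :
    11 * ((Bf r).filter (· ∈ S)).card ≤ 6 * (2*r+1)^2 := by
  set B := Bf (r+1) with hB
  set T := B.filter (· ∈ S) with hT
  set Tin := (Bf r).filter (· ∈ S) with hTin
  have hTB : T ⊆ B := Finset.filter_subset _ _
  have hBB : Bf r ⊆ B := by
    intro z hz
    rw [mem_Bf] at hz ⊢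
    push_cast
    omega
  have hTinT : Tin ⊆ T := by
    intro z hz
    rw [hTin, Finset.mem_filter] at hz
    exact Finset.mem_filter.mpr ⟨hBB hz.1, hz.2⟩
  -- double counting
  have swap : ∑ x ∈ B, (T.filter (fun z => IsNbr x z)).card
      = ∑ z ∈ T, (B.filter (fun x => IsNbr x z)).card := by
    simp_rw [Finset.card_filter]
    exact Finset.sum_comm
  have lower : 8 * Tin.card ≤ ∑ x ∈ B, (T.filter (fun z => IsNbr x z)).card := by
    rw [swap]
    have step : ∀ z ∈ Tin, 8 ≤ (B.filter (fun x => IsNbr x z)).card := by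
      intro z hz
      have hzB : z ∈ Bf r := (Finset.mem_filter.mp hz).1
      have hring : ringF z ⊆ B.filter (fun x => IsNbr x z) := by
        intro x hx
        have hnb : IsNbr z x := mem_ringF.mp hx
        refine Finset.mem_filter.mpr ⟨?_, isNbr_comm.mpr hnb⟩
        obtain ⟨hne, h1, h2⟩ := hnb
        rw [abs_le] at h1 h2
        rw [mem_Bf] at hzB ⊢
        push_cast
        omega
      calc 8 = (ringF z).card := (card_ringF z).symm
        _ ≤ _ := Finset.card_le_card hring
    calc 8 * Tin.card = ∑ _z ∈ Tin, 8 := by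
          rw [Finset.sum_const, smul_eq_mul, mul_comm]
      _ ≤ ∑ z ∈ Tin, (B.filter (fun x => IsNbr x z)).card := Finset.sum_le_sum step
      _ ≤ ∑ z ∈ T, (B.filter (fun x => IsNbr x z)).card :=
          Finset.sum_le_sum_of_subset hTinT
  have upper : ∑ x ∈ B, (T.filter (fun z => IsNbr x z)).card
      ≤ 3 * T.card + 6 * (B.filter (fun x => x ∉ S)).card := by
    have hx : ∀ x ∈ B, (T.filter (fun z => IsNbr x z)).card ≤ nbrCount S x := by
      intro x _
      rw [nbrCount_eq]
      apply Finset.card_le_card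
      intro z hz
      rw [Finset.mem_filter] at hz
      exact Finset.mem_filter.mpr ⟨mem_ringF.mpr hz.2, (Finset.mem_filter.mp hz.1).2⟩
    calc ∑ x ∈ B, (T.filter (fun z => IsNbr x z)).card
        ≤ ∑ x ∈ B, nbrCount S x := Finset.sum_le_sum hx
      _ = ∑ x ∈ T, nbrCount S x + ∑ x ∈ B.filter (fun x => x ∉ S), nbrCount S x := by
          rw [hT]
          exact (Finset.sum_filter_add_sum_filter_not B (fun x => x ∈ S) _).symm
      _ ≤ ∑ _x ∈ T, 3 + ∑ _x ∈ B.filter (fun x => x ∉ S), 6 := by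
          apply add_le_add
          · exact Finset.sum_le_sum fun x hx => h3 x (Finset.mem_filter.mp hx).2
          · exact Finset.sum_le_sum fun x hx => h6 x (Finset.mem_filter.mp hx).2
      _ = 3 * T.card + 6 * (B.filter (fun x => x ∉ S)).card := by
          rw [Finset.sum_const, Finset.sum_const, smul_eq_mul, smul_eq_mul,
            mul_comm, mul_comm (B.filter (fun x => x ∉ S)).card]
  have hsplit : T.card + (B.filter (fun x => x ∉ S)).card = B.card := by
    rw [hT]
    exact Finset.card_filter_add_card_filter_not _
  have hTinTc : Tin.card ≤ T.card := Finset.card_le_card hTinT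
  have hbc : B.card = (2*r+1)^2 := card_Bf r
  omega

open scoped Classical in
lemma ncard_link (S : Set (ℤ × ℤ)) (r : ℕ) :
    Set.ncard (S ∩ box r) = ((Bf r).filter (· ∈ S)).card := by
  rw [← Set.ncard_coe_finset]
  congr 1
  ext z
  simp only [Set.mem_inter_iff, box, Set.mem_setOf_eq, Finset.coe_filter, abs_lt]
  rw [mem_Bf]
  tauto


theorem degThree_outside_bound_and_density (S : Set (ℤ × ℤ))
    (h : ∀ x ∈ S, nbrCount S x ≤ 3) :
    (∀ y ∉ S, nbrCount S y ≤ 6) ∧ upperDensity S ≤ 6 / 11 := by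
  classical
  have h6 := part1 S h
  refine ⟨h6, ?_⟩
  set f : ℕ → ℝ := fun r => (Set.ncard (S ∩ box r) : ℝ) / (2 * (r : ℝ) - 1) ^ 2 with hf
  have key : ∀ r : ℕ, 1 ≤ r → f r ≤ 6/11 + 5/(r:ℝ) := by
    intro r hr
    have hc := count_le S h h6 r
    have hr' : (1:ℝ) ≤ (r:ℝ) := by exact_mod_cast hr
    rw [hf]
    simp only [ncard_link S r]
    set c := ((Bf r).filter (· ∈ S)).card with hcdef
    have hcast : 11 * (c:ℝ) ≤ 6 * (2*(r:ℝ)+1)^2 := by exact_mod_cast hc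
    have hpos : (0:ℝ) < (2*(r:ℝ)-1)^2 := by nlinarith
    rw [div_le_iff₀ hpos]
    have hrpos : (0:ℝ) < (r:ℝ) := by linarith
    have heq : 6/11 + 5/(r:ℝ) = (6*(r:ℝ)+55)/(11*(r:ℝ)) := by
      field_simp
      ring
    rw [heq, div_mul_eq_mul_div, le_div_iff₀ (by linarith : (0:ℝ) < 11*(r:ℝ))]
    nlinarith [mul_le_mul_of_nonneg_left hcast (by linarith : (0:ℝ) ≤ (r:ℝ)),
      sq_nonneg ((r:ℝ) - 1)]
  have main : ∀ ε : ℝ, 0 < ε → upperDensity S ≤ 6/11 + ε := by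
    intro ε hε
    have h5 : Filter.Tendsto (fun n : ℕ => 5/(n:ℝ)) atTop (nhds 0) :=
      tendsto_const_div_atTop_nhds_zero_nat 5
    have hev : ∀ᶠ n : ℕ in atTop, f n ≤ 6/11 + ε := by
      filter_upwards [h5.eventually (gt_mem_nhds hε), Filter.eventually_ge_atTop 1] with n h1 h2
      calc f n ≤ 6/11 + 5/(n:ℝ) := key n h2
        _ ≤ 6/11 + ε := by linarith
    have hnon : ∀ᶠ n : ℕ in atTop, (0:ℝ) ≤ f n :=
      Filter.Eventually.of_forall fun n => by positivity
    exact Filter.limsup_le_of_le (Filter.isCoboundedUnder_le_of_eventually_le atTop hnon) hev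
  by_contra hlt
  push_neg at hlt
  have := main ((upperDensity S - 6/11)/2) (by linarith)
  linarith
end

section
/- For a natural number n define δ(n) to be the supremum of the upper densities of all sets S ⊆ ℤ² satisfying N_S(x) ≤ n for every x ∈ S. Then δ(n − 1) < δ(n) for every n ∈ {1, 2, 4, 5, 6, 7, 8}. -/
open Filter

/-- `δ(n)`: the supremum of upper densities of sets of maximum degree at most `n`. -/
noncomputable def delta (n : ℕ) : ℝ :=
  sSup {d : ℝ | ∃ S : Set (ℤ × ℤ), (∀ x ∈ S, nbrCount S x ≤ n) ∧ d = upperDensity S}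

def D8 : Finset (ℤ × ℤ) :=
  {(1,0),(-1,0),(0,1),(0,-1),(1,1),(-1,-1),(1,-1),(-1,1)}

noncomputable def boxF (r : ℕ) : Finset (ℤ × ℤ) :=
  Finset.Icc (-(r:ℤ)+1) ((r:ℤ)-1) ×ˢ Finset.Icc (-(r:ℤ)+1) ((r:ℤ)-1)

noncomputable def Vsq (r : ℕ) : Finset (ℤ × ℤ) :=
  Finset.Icc (-(r:ℤ)) ((r:ℤ)-1) ×ˢ Finset.Icc (-(r:ℤ)) ((r:ℤ)-1)

lemma card_Vsq (r : ℕ) : (Vsq r).card = (2*r)^2 := by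
  rw [Vsq, Finset.card_product, Int.card_Icc]
  have : ((r:ℤ) - 1 + 1 - (-(r:ℤ))).toNat = 2*r := by omega
  rw [this]; ring

lemma mem_D8 {δ : ℤ × ℤ} : δ ∈ D8 ↔ δ ≠ 0 ∧ |δ.1| ≤ 1 ∧ |δ.2| ≤ 1 := by
  obtain ⟨a, b⟩ := δ
  simp only [D8, Finset.mem_insert, Finset.mem_singleton, Prod.mk.injEq, Prod.ext_iff,
    Prod.fst, Prod.snd, ne_eq, Prod.mk_zero_zero]
  constructor
  · rintro (⟨rfl, rfl⟩|⟨rfl, rfl⟩|⟨rfl, rfl⟩|⟨rfl, rfl⟩|⟨rfl, rfl⟩|⟨rfl, rfl⟩|⟨rfl, rfl⟩|⟨rfl, rfl⟩) <;>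
      refine ⟨?_, by decide, by decide⟩ <;> simp [Prod.ext_iff] <;> omega
  · intro ⟨h0, h1, h2⟩
    rw [abs_le] at h1 h2
    have : ¬ (a = 0 ∧ b = 0) := by simpa [Prod.ext_iff] using h0
    omega

lemma isNbr_iff {x y : ℤ × ℤ} : IsNbr x y ↔ y - x ∈ D8 := by
  rw [mem_D8]
  unfold IsNbr
  constructor
  · rintro ⟨h0, h1, h2⟩
    exact ⟨fun h => h0 (by rwa [sub_eq_zero] at h), h1, h2⟩
  · rintro ⟨h0, h1, h2⟩
    exact ⟨fun h => h0 (by rw [h]; simp), h1, h2⟩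

lemma nbrCount_eq_filter (S : Set (ℤ × ℤ)) (x : ℤ × ℤ) [DecidablePred (· ∈ S)] :
    nbrCount S x = (D8.filter (fun δ => x + δ ∈ S)).card := by
  classical
  rw [nbrCount]
  have h : {y ∈ S | IsNbr x y} = ↑((D8.filter (fun δ => x + δ ∈ S)).image (fun δ => x + δ)) := by
    ext y
    simp only [Set.mem_setOf_eq, Finset.coe_image, Set.mem_image, Finset.mem_coe,
      Finset.mem_filter]
    constructor
    · rintro ⟨hy, hnbr⟩
      exact ⟨y - x, ⟨isNbr_iff.mp hnbr, by simpa using hy⟩, by ring⟩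
    · rintro ⟨δ, ⟨hδ, hS⟩, rfl⟩
      exact ⟨hS, isNbr_iff.mpr (by simpa using hδ)⟩
  rw [h, Set.ncard_coe_finset, Finset.card_image_of_injective _ (add_right_injective x)]

lemma card_le_nbrCount (S : Set (ℤ × ℤ)) (x : ℤ × ℤ) (G : Finset (ℤ × ℤ))
    (hG : ∀ δ ∈ G, δ ∈ D8 ∧ x + δ ∈ S) : G.card ≤ nbrCount S x := by
  classical
  have hsub : ↑(G.image (fun δ => x + δ)) ⊆ {y ∈ S | IsNbr x y} := by
    intro y hy
    simp only [Finset.coe_image, Set.mem_image, Finset.mem_coe] at hy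
    obtain ⟨δ, hδ, rfl⟩ := hy
    exact ⟨(hG δ hδ).2, isNbr_iff.mpr (by simpa using (hG δ hδ).1)⟩
  have hfin : {y ∈ S | IsNbr x y}.Finite := by
    apply Set.Finite.subset (Set.Finite.image (fun δ => x + δ) D8.finite_toSet)
    intro y hy
    exact ⟨y - x, isNbr_iff.mp hy.2, by ring⟩
  calc G.card = (G.image (fun δ => x + δ)).card :=
        (Finset.card_image_of_injective _ (add_right_injective x)).symm
    _ = (↑(G.image (fun δ => x + δ)) : Set (ℤ × ℤ)).ncard := (Set.ncard_coe_finset _).symm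
    _ ≤ nbrCount S x := Set.ncard_le_ncard hsub hfin

set_option maxHeartbeats 2000000 in
open scoped Classical in
theorem key_count (n a b : ℕ)
    (hpt : ∀ x1 x2 x3 x4 : ℕ, x1 ≤ 1 → x2 ≤ 1 → x3 ≤ 1 → x4 ≤ 1 →
      2*a*(x1+x2+x3+x4) ≤ 2*(x1*x2 + x1*x3 + x2*x4 + x3*x4) + 4*(x1*x4 + x2*x3) + 2*b)
    (S : Set (ℤ × ℤ)) (hS : ∀ x ∈ S, nbrCount S x ≤ n) (r : ℕ) :
    (4*a) * ((boxF r).filter (fun x => x ∈ S)).card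
      ≤ n * ((boxF r).filter (fun x => x ∈ S)).card + b * (2*r)^2 := by
  set F := (boxF r).filter (fun x => x ∈ S) with hF
  set ι : ℤ × ℤ → ℕ := fun c => if c ∈ F then 1 else 0 with hι
  have hι1 : ∀ c, ι c ≤ 1 := by intro c; simp only [hι]; split <;> omega
  have hFbox : ∀ x ∈ F, -(r:ℤ)+1 ≤ x.1 ∧ x.1 ≤ (r:ℤ)-1 ∧ -(r:ℤ)+1 ≤ x.2 ∧ x.2 ≤ (r:ℤ)-1 := by
    intro x hx
    simp only [hF, Finset.mem_filter, boxF, Finset.mem_product, Finset.mem_Icc] at hx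
    exact ⟨hx.1.1.1, hx.1.1.2, hx.1.2.1, hx.1.2.2⟩
  have hFS : ∀ x ∈ F, x ∈ S := by
    intro x hx; exact (Finset.mem_filter.mp hx).2
  have hmemV : ∀ x : ℤ × ℤ, x ∈ Vsq r ↔
      (-(r:ℤ) ≤ x.1 ∧ x.1 ≤ (r:ℤ)-1 ∧ -(r:ℤ) ≤ x.2 ∧ x.2 ≤ (r:ℤ)-1) := by
    intro x
    simp [Vsq, Finset.mem_product, Finset.mem_Icc, and_assoc]
  have key : ∀ (v p q s : ℤ×ℤ), p + q = s → v + p + q = v + s := by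
    intro v p q s h; rw [add_assoc, h]
  -- shifted indicator sums
  have sum_shift : ∀ e : ℤ × ℤ, (0 ≤ e.1 ∧ e.1 ≤ 1 ∧ 0 ≤ e.2 ∧ e.2 ≤ 1) →
      ∑ v ∈ Vsq r, ι (v+e) = F.card := by
    intro e he
    have : ∑ v ∈ Vsq r, ι (v+e) = ((Vsq r).filter (fun v => v + e ∈ F)).card := by
      rw [Finset.card_filter]
    rw [this]
    apply Finset.card_bij (fun v _ => v + e)
    · intro v hv; exact (Finset.mem_filter.mp hv).2
    · intro v hv w hw hvw
      exact add_right_cancel hvw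
    · intro x hx
      refine ⟨x - e, Finset.mem_filter.mpr ⟨?_, by simp [hx]⟩, by ring⟩
      have := hFbox x hx
      rw [hmemV]
      refine ⟨by simp; omega, by simp; omega, by simp; omega, by simp; omega⟩
  -- pair sums
  have sum_pair : ∀ e δ : ℤ × ℤ,
      ∑ v ∈ Vsq r, ι (v+e) * ι (v+e+δ) ≤ (F.filter (fun x => x + δ ∈ F)).card := by
    intro e δ
    have : ∑ v ∈ Vsq r, ι (v+e) * ι (v+e+δ)
        = ((Vsq r).filter (fun v => v + e ∈ F ∧ v + e + δ ∈ F)).card := by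
      rw [Finset.card_filter]
      apply Finset.sum_congr rfl
      intro v _
      simp only [hι]
      by_cases h1 : v + e ∈ F <;> by_cases h2 : v + e + δ ∈ F <;> simp [h1, h2]
    rw [this]
    apply Finset.card_le_card_of_injOn (fun v => v + e)
    · intro v hv
      have h := (Finset.mem_filter.mp hv).2
      exact Finset.mem_filter.mpr ⟨h.1, h.2⟩
    · intro v _ w _ hvw
      exact add_right_cancel hvw
  have E_symm : ∀ δ μ : ℤ × ℤ, δ + μ = 0 →
      (F.filter (fun x => x + δ ∈ F)).card = (F.filter (fun x => x + μ ∈ F)).card := by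
    intro δ μ hδμ
    apply Finset.card_bij (fun x _ => x + δ)
    · intro x hx
      have h := Finset.mem_filter.mp hx
      refine Finset.mem_filter.mpr ⟨h.2, ?_⟩
      rw [key _ _ _ 0 hδμ, add_zero]
      exact h.1
    · intro x _ y _ h; exact add_right_cancel h
    · intro y hy
      have h := Finset.mem_filter.mp hy
      refine ⟨y + μ, Finset.mem_filter.mpr ⟨h.2, ?_⟩, ?_⟩
      · rw [key _ _ _ 0 (by rw [add_comm]; exact hδμ), add_zero]
        exact h.1
      · rw [key _ _ _ 0 (by rw [add_comm]; exact hδμ), add_zero]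
  -- name the atoms
  set E10 := (F.filter (fun x => x + ((1,0):ℤ×ℤ) ∈ F)).card with hE10
  set Em10 := (F.filter (fun x => x + ((-1,0):ℤ×ℤ) ∈ F)).card with hEm10
  set E01 := (F.filter (fun x => x + ((0,1):ℤ×ℤ) ∈ F)).card with hE01
  set E0m1 := (F.filter (fun x => x + ((0,-1):ℤ×ℤ) ∈ F)).card with hE0m1
  set E11 := (F.filter (fun x => x + ((1,1):ℤ×ℤ) ∈ F)).card with hE11
  set Em1m1 := (F.filter (fun x => x + ((-1,-1):ℤ×ℤ) ∈ F)).card with hEm1m1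
  set E1m1 := (F.filter (fun x => x + ((1,-1):ℤ×ℤ) ∈ F)).card with hE1m1
  set Em11 := (F.filter (fun x => x + ((-1,1):ℤ×ℤ) ∈ F)).card with hEm11
  have sum_deg : E10 + Em10 + E01 + E0m1 + E11 + Em1m1 + E1m1 + Em11 ≤ n * F.card := by
    have hsum : ∑ δ ∈ D8, (F.filter (fun x => x + δ ∈ F)).card
        = E10 + Em10 + E01 + E0m1 + E11 + Em1m1 + E1m1 + Em11 := by
      rw [D8]
      rw [Finset.sum_insert (by decide), Finset.sum_insert (by decide),
         Finset.sum_insert (by decide), Finset.sum_insert (by decide),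
         Finset.sum_insert (by decide), Finset.sum_insert (by decide),
         Finset.sum_insert (by decide), Finset.sum_singleton]
      rw [hE10, hEm10, hE01, hE0m1, hE11, hEm1m1, hE1m1, hEm11]
      ring
    rw [← hsum]
    calc ∑ δ ∈ D8, (F.filter (fun x => x + δ ∈ F)).card
        = ∑ δ ∈ D8, ∑ x ∈ F, (if x + δ ∈ F then 1 else 0) := by
          apply Finset.sum_congr rfl; intro δ _; rw [Finset.card_filter]
      _ = ∑ x ∈ F, ∑ δ ∈ D8, (if x + δ ∈ F then 1 else 0) := Finset.sum_comm
      _ ≤ ∑ x ∈ F, n := by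
          apply Finset.sum_le_sum
          intro x hx
          calc ∑ δ ∈ D8, (if x + δ ∈ F then 1 else 0)
              = (D8.filter (fun δ => x + δ ∈ F)).card := (Finset.card_filter _ _).symm
            _ ≤ nbrCount S x := by
                apply card_le_nbrCount
                intro δ hδ
                have h := Finset.mem_filter.mp hδ
                exact ⟨h.1, hFS _ h.2⟩
            _ ≤ n := hS x (hFS x hx)
      _ = n * F.card := by rw [Finset.sum_const, smul_eq_mul, mul_comm]
  have esym1 : Em10 = E10 := by
    rw [hEm10, hE10]; rw [E_symm (-1,0) (1,0) (by decide)]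
  have esym2 : E0m1 = E01 := by
    rw [hE0m1, hE01]; rw [E_symm (0,-1) (0,1) (by decide)]
  have esym3 : Em1m1 = E11 := by
    rw [hEm1m1, hE11]; rw [E_symm (-1,-1) (1,1) (by decide)]
  have esym4 : E1m1 = Em11 := by
    rw [hE1m1, hEm11]; rw [E_symm (1,-1) (-1,1) (by decide)]
  -- the six pair sums
  set P1 := ∑ v ∈ Vsq r, ι (v+(0,0)) * ι (v+(1,0)) with hP1
  set P2 := ∑ v ∈ Vsq r, ι (v+(0,0)) * ι (v+(0,1)) with hP2
  set P3 := ∑ v ∈ Vsq r, ι (v+(1,0)) * ι (v+(1,1)) with hP3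
  set P4 := ∑ v ∈ Vsq r, ι (v+(0,1)) * ι (v+(1,1)) with hP4
  set P5 := ∑ v ∈ Vsq r, ι (v+(0,0)) * ι (v+(1,1)) with hP5
  set P6 := ∑ v ∈ Vsq r, ι (v+(1,0)) * ι (v+(0,1)) with hP6
  have t1 : P1 ≤ E10 := by
    rw [hP1, hE10]
    calc ∑ v ∈ Vsq r, ι (v+(0,0)) * ι (v+(1,0))
        = ∑ v ∈ Vsq r, ι (v+(0,0)) * ι (v+(0,0)+(1,0)) := by
          apply Finset.sum_congr rfl; intro v _; rw [key v (0,0) (1,0) (1,0) (by decide)]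
      _ ≤ _ := sum_pair (0,0) (1,0)
  have t2 : P2 ≤ E01 := by
    rw [hP2, hE01]
    calc ∑ v ∈ Vsq r, ι (v+(0,0)) * ι (v+(0,1))
        = ∑ v ∈ Vsq r, ι (v+(0,0)) * ι (v+(0,0)+(0,1)) := by
          apply Finset.sum_congr rfl; intro v _; rw [key v (0,0) (0,1) (0,1) (by decide)]
      _ ≤ _ := sum_pair (0,0) (0,1)
  have t3 : P3 ≤ E01 := by
    rw [hP3, hE01]
    calc ∑ v ∈ Vsq r, ι (v+(1,0)) * ι (v+(1,1))
        = ∑ v ∈ Vsq r, ι (v+(1,0)) * ι (v+(1,0)+(0,1)) := by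
          apply Finset.sum_congr rfl; intro v _; rw [key v (1,0) (0,1) (1,1) (by decide)]
      _ ≤ _ := sum_pair (1,0) (0,1)
  have t4 : P4 ≤ E10 := by
    rw [hP4, hE10]
    calc ∑ v ∈ Vsq r, ι (v+(0,1)) * ι (v+(1,1))
        = ∑ v ∈ Vsq r, ι (v+(0,1)) * ι (v+(0,1)+(1,0)) := by
          apply Finset.sum_congr rfl; intro v _; rw [key v (0,1) (1,0) (1,1) (by decide)]
      _ ≤ _ := sum_pair (0,1) (1,0)
  have t5 : P5 ≤ E11 := by
    rw [hP5, hE11]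
    calc ∑ v ∈ Vsq r, ι (v+(0,0)) * ι (v+(1,1))
        = ∑ v ∈ Vsq r, ι (v+(0,0)) * ι (v+(0,0)+(1,1)) := by
          apply Finset.sum_congr rfl; intro v _; rw [key v (0,0) (1,1) (1,1) (by decide)]
      _ ≤ _ := sum_pair (0,0) (1,1)
  have t6 : P6 ≤ Em11 := by
    rw [hP6, hEm11]
    calc ∑ v ∈ Vsq r, ι (v+(1,0)) * ι (v+(0,1))
        = ∑ v ∈ Vsq r, ι (v+(1,0)) * ι (v+(1,0)+(-1,1)) := by
          apply Finset.sum_congr rfl; intro v _; rw [key v (1,0) (-1,1) (0,1) (by decide)]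
      _ ≤ _ := sum_pair (1,0) (-1,1)
  -- pointwise summation
  have hJ : ∑ v ∈ Vsq r, (ι (v+(0,0)) + ι (v+(1,0)) + ι (v+(0,1)) + ι (v+(1,1)))
      = 4 * F.card := by
    rw [Finset.sum_add_distrib, Finset.sum_add_distrib, Finset.sum_add_distrib]
    rw [sum_shift (0,0) (by norm_num), sum_shift (1,0) (by norm_num),
        sum_shift (0,1) (by norm_num), sum_shift (1,1) (by norm_num)]
    ring
  have hptsum : (2*a) * (4 * F.card)
      ≤ (2*(P1 + P2 + P3 + P4) + 4*(P5 + P6)) + (2*r)^2 * (2*b) := by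
    have step : ∑ v ∈ Vsq r, (2*a) * (ι (v+(0,0)) + ι (v+(1,0)) + ι (v+(0,1)) + ι (v+(1,1)))
        ≤ ∑ v ∈ Vsq r,
          ((2*(ι (v+(0,0)) * ι (v+(1,0)) + ι (v+(0,0)) * ι (v+(0,1))
            + ι (v+(1,0)) * ι (v+(1,1)) + ι (v+(0,1)) * ι (v+(1,1)))
           + 4*(ι (v+(0,0)) * ι (v+(1,1)) + ι (v+(1,0)) * ι (v+(0,1)))) + 2*b) := by
      apply Finset.sum_le_sum
      intro v _
      exact hpt (ι (v+(0,0))) (ι (v+(1,0))) (ι (v+(0,1))) (ι (v+(1,1)))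
        (hι1 _) (hι1 _) (hι1 _) (hι1 _)
    rw [← Finset.mul_sum, hJ] at step
    calc (2*a) * (4 * F.card)
        ≤ ∑ v ∈ Vsq r,
          ((2*(ι (v+(0,0)) * ι (v+(1,0)) + ι (v+(0,0)) * ι (v+(0,1))
            + ι (v+(1,0)) * ι (v+(1,1)) + ι (v+(0,1)) * ι (v+(1,1)))
           + 4*(ι (v+(0,0)) * ι (v+(1,1)) + ι (v+(1,0)) * ι (v+(0,1)))) + 2*b) := step
      _ = (2*(P1 + P2 + P3 + P4) + 4*(P5 + P6)) + (2*r)^2 * (2*b) := by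
          rw [Finset.sum_add_distrib, Finset.sum_const, card_Vsq, smul_eq_mul]
          congr 1
          rw [Finset.sum_add_distrib, ← Finset.mul_sum, ← Finset.mul_sum]
          rw [Finset.sum_add_distrib, Finset.sum_add_distrib, Finset.sum_add_distrib,
              Finset.sum_add_distrib]
  have harith1 : (2*a) * (4 * F.card) = 2 * ((4*a) * F.card) := by ring
  have harith2 : (2*r)^2 * (2*b) = 2 * (b * (2*r)^2) := by ring
  omega

open scoped Classical in
lemma ncard_inter_box (S : Set (ℤ × ℤ)) (r : ℕ) :
    (S ∩ box r).ncard = ((boxF r).filter (fun x => x ∈ S)).card := by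
  have h : S ∩ box r = ↑((boxF r).filter (fun x => x ∈ S)) := by
    ext x
    simp only [Set.mem_inter_iff, box, Set.mem_setOf_eq, Finset.coe_filter,
      boxF, Finset.mem_product, Finset.mem_Icc, abs_lt]
    constructor
    · rintro ⟨hx, h1, h2⟩
      exact ⟨⟨⟨by omega, by omega⟩, by omega, by omega⟩, hx⟩
    · rintro ⟨⟨⟨a1, a2⟩, a3, a4⟩, hx⟩
      exact ⟨hx, ⟨by omega, by omega⟩, by omega, by omega⟩
  rw [h, Set.ncard_coe_finset]

lemma two_r_sub_one_ne (r : ℕ) : (2 * (r:ℝ) - 1) ≠ 0 := by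
  rcases Nat.eq_zero_or_pos r with h | h
  · subst h; norm_num
  · have : (1:ℝ) ≤ (r:ℝ) := by exact_mod_cast h
    nlinarith

lemma tendsto_ratio : Filter.Tendsto (fun r : ℕ => (2*(r:ℝ))/(2*(r:ℝ)-1)) atTop (nhds 1) := by
  have h1 : Filter.Tendsto (fun r : ℕ => 2*(r:ℝ)-1) atTop atTop := by
    apply Filter.tendsto_atTop_add_const_right
    exact (tendsto_natCast_atTop_atTop).const_mul_atTop (by norm_num)
  have h2 : Filter.Tendsto (fun r : ℕ => (2*(r:ℝ)-1)⁻¹) atTop (nhds 0) := h1.inv_tendsto_atTop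
  have h3 : Filter.Tendsto (fun r : ℕ => 1 + (2*(r:ℝ)-1)⁻¹) atTop (nhds (1+0)) :=
    tendsto_const_nhds.add h2
  rw [add_zero] at h3
  apply h3.congr'
  filter_upwards [Filter.eventually_atTop.mpr ⟨1, fun r hr => hr⟩] with r hr
  have hne := two_r_sub_one_ne r
  field_simp
  ring

theorem upperDensity_le_bound (n a b : ℕ)
    (hpt : ∀ x1 x2 x3 x4 : ℕ, x1 ≤ 1 → x2 ≤ 1 → x3 ≤ 1 → x4 ≤ 1 →
      2*a*(x1+x2+x3+x4) ≤ 2*(x1*x2 + x1*x3 + x2*x4 + x3*x4) + 4*(x1*x4 + x2*x3) + 2*b)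
    (hna : n < 4*a)
    (S : Set (ℤ × ℤ)) (hS : ∀ x ∈ S, nbrCount S x ≤ n) :
    upperDensity S ≤ (b : ℝ) / (4*a - n) := by
  classical
  set C : ℝ := (b : ℝ) / (4*a - n) with hC
  have hden : (0:ℝ) < 4*(a:ℝ) - n := by
    have : (n:ℝ) < 4*a := by exact_mod_cast hna
    linarith
  have hC0 : 0 ≤ C := by positivity
  set f : ℕ → ℝ := fun r => (Set.ncard (S ∩ box r) : ℝ) / (2 * (r : ℝ) - 1) ^ 2 with hf
  set g : ℕ → ℝ := fun r => C * ((2*(r:ℝ))/(2*(r:ℝ)-1))^2 with hg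
  have hfg : ∀ r, f r ≤ g r := by
    intro r
    have hcount := key_count n a b hpt S hS r
    have hcard : ((4*a - n : ℕ) : ℝ) * ((boxF r).filter (fun x => x ∈ S)).card
        ≤ (b : ℝ) * (2*(r:ℝ))^2 := by
      have hdist : (4*a - n) * ((boxF r).filter (fun x => x ∈ S)).card
          + n * ((boxF r).filter (fun x => x ∈ S)).card
          = 4*a * ((boxF r).filter (fun x => x ∈ S)).card := by
        rw [← Nat.add_mul, Nat.sub_add_cancel hna.le]
      have : (4*a - n) * ((boxF r).filter (fun x => x ∈ S)).card ≤ b * (2*r)^2 := by omega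
      calc ((4*a - n : ℕ) : ℝ) * (((boxF r).filter (fun x => x ∈ S)).card : ℝ)
          = (((4*a - n) * ((boxF r).filter (fun x => x ∈ S)).card : ℕ) : ℝ) := by push_cast; ring
        _ ≤ ((b * (2*r)^2 : ℕ) : ℝ) := by exact_mod_cast this
        _ = (b : ℝ) * (2*(r:ℝ))^2 := by push_cast; ring
    have hcast : ((4*a - n : ℕ) : ℝ) = 4*(a:ℝ) - n := by
      have : n ≤ 4*a := le_of_lt hna
      push_cast [Nat.cast_sub this]; ring
    rw [hcast] at hcard
    have h1 : (((boxF r).filter (fun x => x ∈ S)).card : ℝ) ≤ C * (2*(r:ℝ))^2 := by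
      rw [hC, div_mul_eq_mul_div, le_div_iff₀ hden, mul_comm]
      exact hcard
    have hsq : (0:ℝ) < (2 * (r : ℝ) - 1) ^ 2 := by
      have := two_r_sub_one_ne r
      positivity
    rw [hf, hg]
    simp only
    rw [ncard_inter_box, div_pow, ← mul_div_assoc]
    gcongr
  have hgtend : Filter.Tendsto g atTop (nhds C) := by
    have := (tendsto_ratio.pow 2)
    have h2 : Filter.Tendsto (fun r : ℕ => C * ((2*(r:ℝ))/(2*(r:ℝ)-1))^2) atTop
        (nhds (C * 1^2)) := tendsto_const_nhds.mul this
    simpa using h2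
  have hf0 : ∀ r, 0 ≤ f r := by
    intro r; rw [hf]; positivity
  calc upperDensity S = limsup f atTop := rfl
    _ ≤ limsup g atTop := by
        have hcob : Filter.IsCoboundedUnder (· ≤ ·) atTop f :=
          (Filter.isBoundedUnder_of ⟨0, hf0⟩).isCoboundedUnder_le
        have hbdd : Filter.IsBoundedUnder (· ≤ ·) atTop g := hgtend.isBoundedUnder_le
        exact Filter.limsup_le_limsup (Filter.Eventually.of_forall hfg) hcob hbdd
    _ = C := hgtend.limsup_eq

lemma mem_boxF {r : ℕ} {x : ℤ × ℤ} : x ∈ boxF r ↔ x ∈ box r := by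
  simp only [boxF, Finset.mem_product, Finset.mem_Icc, box, Set.mem_setOf_eq, abs_lt]
  omega

lemma box_finite (r : ℕ) : (box r).Finite := by
  apply Set.Finite.subset (boxF r).finite_toSet
  intro x hx
  simpa [mem_boxF] using hx

lemma card_boxF (r : ℕ) (hr : 1 ≤ r) : (boxF r).card = (2*r-1)^2 := by
  rw [boxF, Finset.card_product, Int.card_Icc]
  have : ((r:ℤ) - 1 + 1 - (-(r:ℤ)+1)).toNat = 2*r-1 := by omega
  rw [this]; ring

-- f r ≤ 1
lemma ratio_le_one (S : Set (ℤ × ℤ)) (r : ℕ) :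
    (Set.ncard (S ∩ box r) : ℝ) / (2 * (r : ℝ) - 1) ^ 2 ≤ 1 := by
  rcases Nat.eq_zero_or_pos r with h | h
  · subst h
    have : S ∩ box 0 = ∅ := by
      ext x; simp [box]
    simp [this]
  · have hcard : (S ∩ box r).ncard ≤ (2*r-1)^2 := by
      rw [← card_boxF r h]
      rw [← Set.ncard_coe_finset (boxF r)]
      apply Set.ncard_le_ncard _ (boxF r).finite_toSet
      intro x hx
      simpa [mem_boxF] using hx.2
    have hc : ((2*r-1:ℕ):ℝ) = 2*(r:ℝ)-1 := by
      push_cast [Nat.cast_sub (by omega : 1 ≤ 2*r)]; ring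
    have hpos : (0:ℝ) < (2*(r:ℝ)-1)^2 := by
      have : (1:ℝ) ≤ (r:ℝ) := by exact_mod_cast h
      nlinarith
    rw [div_le_one hpos]
    calc ((S ∩ box r).ncard : ℝ) ≤ (((2*r-1)^2 : ℕ) : ℝ) := by exact_mod_cast hcard
      _ = (((2*r-1:ℕ)):ℝ)^2 := by push_cast; ring
      _ = (2*(r:ℝ)-1)^2 := by rw [hc]

lemma upperDensity_le_one (S : Set (ℤ × ℤ)) : upperDensity S ≤ 1 := by
  rw [upperDensity]
  have h1 : Filter.Tendsto (fun _ : ℕ => (1:ℝ)) atTop (nhds 1) := tendsto_const_nhds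
  calc limsup (fun r : ℕ => (Set.ncard (S ∩ box r) : ℝ) / (2 * (r : ℝ) - 1) ^ 2) atTop
      ≤ limsup (fun _ : ℕ => (1:ℝ)) atTop :=
        Filter.limsup_le_limsup (Filter.Eventually.of_forall (ratio_le_one S))
          ((Filter.isBoundedUnder_of ⟨0, fun r => by positivity⟩).isCoboundedUnder_le)
          (h1.isBoundedUnder_le)
    _ = 1 := h1.limsup_eq

lemma upperDensity_nonneg (S : Set (ℤ × ℤ)) : 0 ≤ upperDensity S := by
  rw [upperDensity]
  have h0 : Filter.Tendsto (fun _ : ℕ => (0:ℝ)) atTop (nhds 0) := tendsto_const_nhds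
  calc (0:ℝ) = limsup (fun _ : ℕ => (0:ℝ)) atTop := h0.limsup_eq.symm
    _ ≤ _ :=
        Filter.limsup_le_limsup (Filter.Eventually.of_forall (fun r => by positivity))
          (h0.isCoboundedUnder_le)
          (Filter.isBoundedUnder_of ⟨1, fun r => ratio_le_one S r⟩)

lemma delta_bddAbove (n : ℕ) :
    BddAbove {d : ℝ | ∃ S : Set (ℤ × ℤ), (∀ x ∈ S, nbrCount S x ≤ n) ∧ d = upperDensity S} := by
  refine ⟨1, ?_⟩
  rintro d ⟨S, _, rfl⟩
  exact upperDensity_le_one S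

-- periodic sets
def perSet (p : ℕ) (A : Finset (ZMod p × ZMod p)) : Set (ℤ × ℤ) :=
  {x | ((x.1 : ZMod p), (x.2 : ZMod p)) ∈ A}

instance (p : ℕ) (A : Finset (ZMod p × ZMod p)) : DecidablePred (· ∈ perSet p A) :=
  fun x => by unfold perSet; simp only [Set.mem_setOf_eq]; infer_instance

lemma nbrCount_perSet_le (p n : ℕ) (A : Finset (ZMod p × ZMod p))
    (hdeg : ∀ z ∈ A,
      (D8.filter (fun δ => (z.1 + (δ.1 : ZMod p), z.2 + (δ.2 : ZMod p)) ∈ A)).card ≤ n) :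
    ∀ x ∈ perSet p A, nbrCount (perSet p A) x ≤ n := by
  intro x hx
  rw [nbrCount_eq_filter]
  have hfe : (D8.filter (fun δ => x + δ ∈ perSet p A))
      = (D8.filter (fun δ =>
          (((x.1 : ZMod p) + (δ.1 : ZMod p), (x.2 : ZMod p) + (δ.2 : ZMod p)) ∈ A))) := by
    apply Finset.filter_congr
    intro δ _
    have h1 : (((x+δ).1 : ℤ) : ZMod p) = (x.1 : ZMod p) + (δ.1 : ZMod p) := by
      rw [Prod.fst_add]; push_cast; ring
    have h2 : (((x+δ).2 : ℤ) : ZMod p) = (x.2 : ZMod p) + (δ.2 : ZMod p) := by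
      rw [Prod.snd_add]; push_cast; ring
    simp only [perSet, Set.mem_setOf_eq, h1, h2]
  rw [hfe]
  exact hdeg ((x.1 : ZMod p), (x.2 : ZMod p)) hx

lemma card_lower (p : ℕ) [NeZero p] (A : Finset (ZMod p × ZMod p)) (r : ℕ) (hr : 1 ≤ r) :
    A.card * ((2*r-1)/p)^2 ≤ (perSet p A ∩ box r).ncard := by
  classical
  have hp : 0 < p := Nat.pos_of_ne_zero (NeZero.ne p)
  set t := (2*r-1)/p with ht
  set c : ZMod p := -((r:ℕ) : ZMod p) + 1 with hc
  set φ : ((ℕ × ℕ) × (ZMod p × ZMod p)) → ℤ × ℤ := fun g =>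
    (-(r:ℤ)+1 + p*g.1.1 + ((g.2.1 - c).val : ℕ), -(r:ℤ)+1 + p*g.1.2 + ((g.2.2 - c).val : ℕ))
    with hφ
  set G : Finset ((ℕ × ℕ) × (ZMod p × ZMod p)) := (Finset.range t ×ˢ Finset.range t) ×ˢ A
    with hG
  have hval : ∀ z : ZMod p, (z - c).val < p := fun z => ZMod.val_lt _
  have hcoord : ∀ i : ℕ, i < t → ∀ z : ZMod p,
      |(-(r:ℤ)+1 + p*i + ((z - c).val : ℕ))| < (r:ℤ) := by
    intro i hi z
    have h1 : (z - c).val < p := hval z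
    have h2 : p * i + (z - c).val < p * t := by
      calc p * i + (z - c).val < p * i + p := by omega
        _ = p * (i+1) := by ring
        _ ≤ p * t := Nat.mul_le_mul_left p hi
    have h3 : p * t ≤ 2*r-1 := by
      rw [mul_comm]; exact Nat.div_mul_le_self _ _
    have h4 : (p:ℤ) * i + ((z - c).val : ℕ) < (2*r-1 : ℕ) := by exact_mod_cast lt_of_lt_of_le h2 h3
    have h5 : (0:ℤ) ≤ (p:ℤ) * i := by positivity
    have h6 : ((2*r-1 : ℕ) : ℤ) = 2*(r:ℤ)-1 := by push_cast [Nat.cast_sub (by omega : 1 ≤ 2*r)]; ring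
    rw [abs_lt]
    omega
  have hmem : ∀ g ∈ G, φ g ∈ perSet p A ∩ box r := by
    rintro ⟨⟨i, j⟩, z⟩ hg
    simp only [hG, Finset.mem_product, Finset.mem_range] at hg
    obtain ⟨⟨hi, hj⟩, hz⟩ := hg
    constructor
    · simp only [perSet, Set.mem_setOf_eq, hφ]
      have key : ∀ (i : ℕ) (z1 : ZMod p),
          ((-(r:ℤ)+1 + p*i + ((z1 - c).val : ℕ) : ℤ) : ZMod p) = z1 := by
        intro i z1
        push_cast [ZMod.natCast_self, ZMod.natCast_val, ZMod.cast_id]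
        rw [hc]
        ring
      rw [key i z.1, key j z.2]
      exact hz
    · exact ⟨hcoord i hi z.1, hcoord j hj z.2⟩
  have hinj : Set.InjOn φ ↑G := by
    rintro ⟨⟨i, j⟩, z⟩ hg ⟨⟨i', j'⟩, z'⟩ hg' heq
    simp only [hφ, Prod.mk.injEq] at heq
    obtain ⟨h1, h2⟩ := heq
    have split : ∀ (i i' : ℕ) (a b : ZMod p),
        (-(r:ℤ)+1 + p*i + ((a - c).val : ℕ)) = (-(r:ℤ)+1 + p*i' + ((b - c).val : ℕ)) →
        i = i' ∧ a = b := by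
      intro i i' a b h
      have hn : p*i + (a - c).val = p*i' + (b - c).val := by omega
      have hi : i = i' := by
        have e1 : (p*i + (a - c).val) / p = i := by
          rw [Nat.mul_add_div hp, Nat.div_eq_of_lt (hval a), add_zero]
        have e2 : (p*i' + (b - c).val) / p = i' := by
          rw [Nat.mul_add_div hp, Nat.div_eq_of_lt (hval b), add_zero]
        rw [← e1, ← e2, hn]
      subst hi
      have hv : (a - c).val = (b - c).val := by omega
      have : a - c = b - c := by
        have := congrArg (fun m : ℕ => (m : ZMod p)) hv
        simpa [ZMod.natCast_val, ZMod.cast_id] using this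
      constructor
      · rfl
      · have := congrArg (· + c) this
        simpa using this
    obtain ⟨hii, hzz1⟩ := split i i' z.1 z'.1 h1
    obtain ⟨hjj, hzz2⟩ := split j j' z.2 z'.2 h2
    simp [hii, hjj, Prod.ext_iff, hzz1, hzz2]
  calc A.card * t^2 = G.card := by
        rw [hG, Finset.card_product, Finset.card_product, Finset.card_range]; ring
    _ = (G.image φ).card := (Finset.card_image_of_injOn hinj).symm
    _ = (↑(G.image φ) : Set (ℤ × ℤ)).ncard := (Set.ncard_coe_finset _).symm
    _ ≤ (perSet p A ∩ box r).ncard := by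
        apply Set.ncard_le_ncard
        · intro x hx
          simp only [Finset.coe_image, Set.mem_image, Finset.mem_coe] at hx
          obtain ⟨g, hg, rfl⟩ := hx
          exact hmem g hg
        · exact Set.Finite.inter_of_right (box_finite r) _

lemma le_upperDensity_perSet (p : ℕ) [NeZero p] (A : Finset (ZMod p × ZMod p)) :
    (A.card : ℝ) / (p:ℝ)^2 ≤ upperDensity (perSet p A) := by
  have hp : 0 < p := Nat.pos_of_ne_zero (NeZero.ne p)
  have hpR : (0:ℝ) < (p:ℝ) := by exact_mod_cast hp
  set m := A.card with hm
  set f : ℕ → ℝ := fun r => ((perSet p A ∩ box r).ncard : ℝ) / (2 * (r : ℝ) - 1) ^ 2 with hf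
  set h : ℕ → ℝ := fun r => (m:ℝ) * (1/(p:ℝ) - 1/(2*(r:ℝ)-1))^2 with hh
  have hhf : ∀ r : ℕ, p + 1 ≤ r → h r ≤ f r := by
    intro r hr
    have hr1 : 1 ≤ r := by omega
    have hu : (1:ℝ) ≤ 2*(r:ℝ)-1 := by
      have : (1:ℝ) ≤ (r:ℝ) := by exact_mod_cast hr1
      linarith
    have hu0 : (0:ℝ) < 2*(r:ℝ)-1 := by linarith
    set t := (2*r-1)/p with ht
    have hcount := card_lower p A r hr1
    have htR : ((2*(r:ℝ)-1) - p) / p ≤ (t:ℝ) := by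
      have h1 : 2*r-1 < p*t + p := by
        have h0 := Nat.mod_lt (2*r-1) hp
        have h1 := Nat.div_add_mod (2*r-1) p
        rw [ht]
        omega
      have h2 : ((2*r-1:ℕ):ℝ) = 2*(r:ℝ)-1 := by
        push_cast [Nat.cast_sub (by omega : 1 ≤ 2*r)]; ring
      have h3 : (2*(r:ℝ)-1) < p*t + p := by
        rw [← h2]
        exact_mod_cast h1
      rw [div_le_iff₀ hpR]
      nlinarith
    have ht0 : (0:ℝ) ≤ ((2*(r:ℝ)-1) - p) / p := by
      apply div_nonneg _ (le_of_lt hpR)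
      have : ((p:ℝ) + 1) ≤ (r:ℝ) := by exact_mod_cast hr
      linarith
    have hsq : (((2*(r:ℝ)-1) - p) / p)^2 ≤ (t:ℝ)^2 := by
      apply pow_le_pow_left₀ ht0 htR
    have hcountR : (m:ℝ) * (t:ℝ)^2 ≤ ((perSet p A ∩ box r).ncard : ℝ) := by
      calc (m:ℝ) * (t:ℝ)^2 = ((m * t^2 : ℕ) : ℝ) := by push_cast; ring
        _ ≤ _ := by exact_mod_cast hcount
    have heq : (m:ℝ) * (((2*(r:ℝ)-1) - p) / p)^2 / (2*(r:ℝ)-1)^2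
        = (m:ℝ) * (1/(p:ℝ) - 1/(2*(r:ℝ)-1))^2 := by
      rw [div_eq_iff (by positivity : ((2*(r:ℝ)-1)^2 : ℝ) ≠ 0)]
      field_simp
    rw [hh, hf]
    simp only
    rw [← heq]
    apply div_le_div_of_nonneg_right _ (by positivity)
    calc (m:ℝ) * (((2*(r:ℝ)-1) - p) / p)^2 ≤ (m:ℝ) * (t:ℝ)^2 := by
          apply mul_le_mul_of_nonneg_left hsq (by positivity)
      _ ≤ _ := hcountR
  have hhtend : Filter.Tendsto h atTop (nhds ((m:ℝ)/(p:ℝ)^2)) := by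
    have h1 : Filter.Tendsto (fun r : ℕ => 2*(r:ℝ)-1) atTop atTop := by
      apply Filter.tendsto_atTop_add_const_right
      exact (tendsto_natCast_atTop_atTop).const_mul_atTop (by norm_num)
    have h2 : Filter.Tendsto (fun r : ℕ => 1/(2*(r:ℝ)-1)) atTop (nhds 0) := by
      simp only [one_div]; exact h1.inv_tendsto_atTop
    have h3 : Filter.Tendsto (fun r : ℕ => 1/(p:ℝ) - 1/(2*(r:ℝ)-1)) atTop
        (nhds (1/(p:ℝ) - 0)) := tendsto_const_nhds.sub h2
    have h4 := (h3.pow 2)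
    have h5 : Filter.Tendsto h atTop (nhds ((m:ℝ) * (1/(p:ℝ) - 0)^2)) :=
      tendsto_const_nhds.mul h4
    convert h5 using 2
    rw [sub_zero, div_pow, one_pow]
    ring
  calc (A.card : ℝ) / (p:ℝ)^2 = (m:ℝ)/(p:ℝ)^2 := by rw [hm]
    _ = limsup h atTop := hhtend.limsup_eq.symm
    _ ≤ limsup f atTop := by
        apply Filter.limsup_le_limsup _ hhtend.isCoboundedUnder_le
          (Filter.isBoundedUnder_of ⟨1, fun r => ratio_le_one _ r⟩)
        filter_upwards [Filter.eventually_atTop.mpr ⟨p+1, fun r hr => hr⟩] with r hr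
        exact hhf r hr
    _ = upperDensity (perSet p A) := rfl

lemma perSet_le_delta (n p : ℕ) [NeZero p] (A : Finset (ZMod p × ZMod p))
    (hdeg : ∀ z ∈ A,
      (D8.filter (fun δ => (z.1 + (δ.1 : ZMod p), z.2 + (δ.2 : ZMod p)) ∈ A)).card ≤ n) :
    (A.card : ℝ) / (p:ℝ)^2 ≤ delta n := by
  calc (A.card : ℝ) / (p:ℝ)^2 ≤ upperDensity (perSet p A) := le_upperDensity_perSet p A
    _ ≤ delta n := by
        apply le_csSup (delta_bddAbove n)
        exact ⟨perSet p A, nbrCount_perSet_le p n A hdeg, rfl⟩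

lemma delta_le_bound (n a b : ℕ)
    (hpt : ∀ x1 x2 x3 x4 : ℕ, x1 ≤ 1 → x2 ≤ 1 → x3 ≤ 1 → x4 ≤ 1 →
      2*a*(x1+x2+x3+x4) ≤ 2*(x1*x2 + x1*x3 + x2*x4 + x3*x4) + 4*(x1*x4 + x2*x3) + 2*b)
    (hna : n < 4*a) :
    delta n ≤ (b : ℝ) / (4*a - n) := by
  apply Real.sSup_le
  · rintro d ⟨S, hS, rfl⟩
    exact upperDensity_le_bound n a b hpt hna S hS
  · have : (n:ℝ) < 4*a := by exact_mod_cast hna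
    apply div_nonneg (by positivity)
    linarith

lemma hpt11 : ∀ x1 x2 x3 x4 : ℕ, x1 ≤ 1 → x2 ≤ 1 → x3 ≤ 1 → x4 ≤ 1 →
    2*1*(x1+x2+x3+x4) ≤ 2*(x1*x2 + x1*x3 + x2*x4 + x3*x4) + 4*(x1*x4 + x2*x3) + 2*1 := by
  intro x1 x2 x3 x4 h1 h2 h3 h4
  interval_cases x1 <;> interval_cases x2 <;> interval_cases x3 <;> interval_cases x4 <;> norm_num

lemma hpt35 : ∀ x1 x2 x3 x4 : ℕ, x1 ≤ 1 → x2 ≤ 1 → x3 ≤ 1 → x4 ≤ 1 →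
    2*3*(x1+x2+x3+x4) ≤ 2*(x1*x2 + x1*x3 + x2*x4 + x3*x4) + 4*(x1*x4 + x2*x3) + 2*5 := by
  intro x1 x2 x3 x4 h1 h2 h3 h4
  interval_cases x1 <;> interval_cases x2 <;> interval_cases x3 <;> interval_cases x4 <;> norm_num

lemma hpt48 : ∀ x1 x2 x3 x4 : ℕ, x1 ≤ 1 → x2 ≤ 1 → x3 ≤ 1 → x4 ≤ 1 →
    2*4*(x1+x2+x3+x4) ≤ 2*(x1*x2 + x1*x3 + x2*x4 + x3*x4) + 4*(x1*x4 + x2*x3) + 2*8 := by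
  intro x1 x2 x3 x4 h1 h2 h3 h4
  interval_cases x1 <;> interval_cases x2 <;> interval_cases x3 <;> interval_cases x4 <;> norm_num

def A1 : Finset (ZMod 6 × ZMod 6) :=
  Finset.univ.filter (fun z => z.2.val % 2 = 0 ∧ z.1.val % 3 < 2)
def A2 : Finset (ZMod 2 × ZMod 2) := Finset.univ.filter (fun z => z.2 = 0)
def A4 : Finset (ZMod 5 × ZMod 5) := Finset.univ.filter (fun z => (z.1 + 2*z.2).val ≤ 2)
def A5 : Finset (ZMod 5 × ZMod 5) :=
  Finset.univ.filter (fun z =>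
    z.1 = 0 ∨ (z.1 = 1 ∧ (z.2 = 0 ∨ z.2 = 3)) ∨ (z.1 = 2 ∧ z.2 ≠ 4)
      ∨ (z.1 = 3 ∧ z.2 ≠ 1) ∨ (z.1 = 4 ∧ (z.2 = 0 ∨ z.2 = 2)))
def A6 : Finset (ZMod 5 × ZMod 5) := Finset.univ.filter (fun z => z.2 ≠ 2*z.1)
def A7 : Finset (ZMod 3 × ZMod 3) := Finset.univ.filter (fun z => z ≠ 0)
def A8 : Finset (ZMod 1 × ZMod 1) := Finset.univ

theorem delta_strictMono_off_three :
    ∀ n ∈ ({1, 2, 4, 5, 6, 7, 8} : Finset ℕ), delta (n - 1) < delta n := by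
  have c1 : delta 0 < delta 1 := by
    calc delta 0 ≤ (1 : ℝ) / (4*1 - 0) := by exact_mod_cast delta_le_bound 0 1 1 hpt11 (by norm_num)
      _ < (A1.card : ℝ) / (6:ℝ)^2 := by rw [show A1.card = 12 from by decide]; norm_num
      _ ≤ delta 1 := by exact_mod_cast perSet_le_delta 1 6 A1 (by decide)
  have c2 : delta 1 < delta 2 := by
    calc delta 1 ≤ (1 : ℝ) / (4*1 - 1) := by exact_mod_cast delta_le_bound 1 1 1 hpt11 (by norm_num)
      _ < (A2.card : ℝ) / (2:ℝ)^2 := by rw [show A2.card = 2 from by decide]; norm_num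
      _ ≤ delta 2 := by exact_mod_cast perSet_le_delta 2 2 A2 (by decide)
  have c4 : delta 3 < delta 4 := by
    calc delta 3 ≤ (5 : ℝ) / (4*3 - 3) := by exact_mod_cast delta_le_bound 3 3 5 hpt35 (by norm_num)
      _ < (A4.card : ℝ) / (5:ℝ)^2 := by rw [show A4.card = 15 from by decide]; norm_num
      _ ≤ delta 4 := by exact_mod_cast perSet_le_delta 4 5 A4 (by decide)
  have c5 : delta 4 < delta 5 := by
    calc delta 4 ≤ (5 : ℝ) / (4*3 - 4) := by exact_mod_cast delta_le_bound 4 3 5 hpt35 (by norm_num)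
      _ < (A5.card : ℝ) / (5:ℝ)^2 := by rw [show A5.card = 17 from by decide]; norm_num
      _ ≤ delta 5 := by exact_mod_cast perSet_le_delta 5 5 A5 (by decide)
  have c6 : delta 5 < delta 6 := by
    calc delta 5 ≤ (5 : ℝ) / (4*3 - 5) := by exact_mod_cast delta_le_bound 5 3 5 hpt35 (by norm_num)
      _ < (A6.card : ℝ) / (5:ℝ)^2 := by rw [show A6.card = 20 from by decide]; norm_num
      _ ≤ delta 6 := by exact_mod_cast perSet_le_delta 6 5 A6 (by decide)
  have c7 : delta 6 < delta 7 := by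
    calc delta 6 ≤ (5 : ℝ) / (4*3 - 6) := by exact_mod_cast delta_le_bound 6 3 5 hpt35 (by norm_num)
      _ < (A7.card : ℝ) / (3:ℝ)^2 := by rw [show A7.card = 8 from by decide]; norm_num
      _ ≤ delta 7 := by exact_mod_cast perSet_le_delta 7 3 A7 (by decide)
  have c8 : delta 7 < delta 8 := by
    calc delta 7 ≤ (8 : ℝ) / (4*4 - 7) := by exact_mod_cast delta_le_bound 7 4 8 hpt48 (by norm_num)
      _ < (A8.card : ℝ) / (1:ℝ)^2 := by rw [show A8.card = 1 from by decide]; norm_num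
      _ ≤ delta 8 := by exact_mod_cast perSet_le_delta 8 1 A8 (by decide)
  intro n hn
  fin_cases hn
  · exact c1
  · exact c2
  · exact c4
  · exact c5
  · exact c6
  · exact c7
  · exact c8
end
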